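/- The matrices A and A* of L_N(q) satisfy the tridiagonal relation A³A* − (q + q^{-1} + 1)A²A*A + (q + q^{-1} + 1)AA*A² − A*A³ = q^{N-2}(q+1)²(AA* − A*A). -/

import Mathlib

open scoped Classical
open Module

set_option linter.unusedSectionVars false
set_option linter.unreachableTactic false
set_option linter.unusedTactic false
set_option maxHeartbeats 1000000

section Counting

variable {F : Type*} [Field F] [Fintype F]
/-- helper: number of nonzero elements -/
lemma card_filter_ne_zero (α : Type*) [Fintype α] [DecidableEq α] [Zero α] :
    (Finset.univ.filter (fun v : α => v ≠ 0)).card + 1 = Fintype.card α := by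
  classical
  rw [Finset.filter_ne', Finset.card_erase_of_mem (Finset.mem_univ _)]
  have : 0 < Fintype.card α := Fintype.card_pos_iff.mpr ⟨0⟩
  have h0 : (Finset.univ : Finset α).card = Fintype.card α := Finset.card_univ
  omega

/-- The number of one-dimensional subspaces of a finite-dimensional space over a finite field. -/
lemma lines_count (W : Type*) [AddCommGroup W] [Module F W] [FiniteDimensional F W] :
    Nat.card {ℓ : Submodule F W // finrank F ℓ = 1} * (Fintype.card F - 1) + 1
      = Fintype.card F ^ finrank F W := by
  classical
  haveI : Finite W := Module.finite_of_finite F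
  haveI : Fintype W := Fintype.ofFinite W
  haveI : Finite (Submodule F W) :=
    Finite.of_injective (fun s : Submodule F W => (s : Set W)) SetLike.coe_injective
  haveI : Fintype (Submodule F W) := Fintype.ofFinite _
  set q := Fintype.card F with hqdef
  have hq1 : 1 ≤ q := Fintype.card_pos
  have hcardW : Fintype.card W = q ^ finrank F W := card_eq_pow_finrank
  set s : Finset W := Finset.univ.filter (fun v => v ≠ 0) with hs
  set t : Finset (Submodule F W) := Finset.univ.filter (fun ℓ => finrank F ℓ = 1) with ht
  have hmem : ∀ v ∈ s, Submodule.span F {v} ∈ t := by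
    intro v hv
    simp only [hs, Finset.mem_filter, Finset.mem_univ, true_and] at hv
    simp only [ht, Finset.mem_filter, Finset.mem_univ, true_and]
    exact finrank_span_singleton hv
  have hfib := Finset.card_eq_sum_card_fiberwise hmem
  have hfibcard : ∀ ℓ ∈ t, (s.filter (fun v => Submodule.span F {v} = ℓ)).card = q - 1 := by
    intro ℓ hℓ
    simp only [ht, Finset.mem_filter, Finset.mem_univ, true_and] at hℓ
    have h1 : s.filter (fun v => Submodule.span F {v} = ℓ)
        = Finset.univ.filter (fun v => v ∈ ℓ ∧ v ≠ 0) := by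
      ext v
      simp only [hs, Finset.mem_filter, Finset.mem_univ, true_and]
      constructor
      · rintro ⟨hv0, rfl⟩
        exact ⟨Submodule.mem_span_singleton_self v, hv0⟩
      · rintro ⟨hvℓ, hv0⟩
        refine ⟨hv0, ?_⟩
        apply Submodule.eq_of_le_of_finrank_eq
        · simpa [Submodule.span_le] using hvℓ
        · rw [finrank_span_singleton hv0, hℓ]
    rw [h1, ← Fintype.card_subtype]
    have e : {v : W // v ∈ ℓ ∧ v ≠ 0} ≃ {u : ℓ // u ≠ 0} :=
      { toFun := fun v => ⟨⟨v.1, v.2.1⟩, by simpa [Submodule.mk_eq_zero] using v.2.2⟩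
        invFun := fun u => ⟨u.1.1, u.1.2, by
          intro h0
          exact u.2 (by ext; simpa using h0)⟩
        left_inv := fun v => rfl
        right_inv := fun u => rfl }
    rw [Fintype.card_congr e]
    have h2 : Fintype.card {u : ℓ // ¬ u = 0} + 1 = Fintype.card ℓ := by
      have h3 := Fintype.card_subtype_compl (fun u : ℓ => u = 0)
      have h4 : Fintype.card {u : ℓ // u = 0} = 1 := Fintype.card_subtype_eq (0 : ℓ)
      have h5 : 0 < Fintype.card ℓ := Fintype.card_pos_iff.mpr ⟨0⟩
      rw [h4] at h3
      omega
    have h6 : Fintype.card ℓ = q ^ finrank F ℓ := card_eq_pow_finrank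
    rw [hℓ, pow_one] at h6
    simp only [ne_eq]
    omega
  rw [Finset.sum_congr rfl hfibcard, Finset.sum_const, smul_eq_mul] at hfib
  have hscard : s.card + 1 = q ^ finrank F W := by rw [card_filter_ne_zero W] at *; omega
  have htcard : Nat.card {ℓ : Submodule F W // finrank F ℓ = 1} = t.card := by
    rw [Nat.card_eq_fintype_card, Fintype.card_subtype]
  rw [htcard]
  omega

variable {V : Type*} [AddCommGroup V] [Module F V] [FiniteDimensional F V]

lemma map_mkQ_finrank (y w : Submodule F V) (hw : y ≤ w) :
    finrank F (w.map y.mkQ) + finrank F y = finrank F w := by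
  have h1 := LinearMap.finrank_range_add_finrank_ker ((y.mkQ).comp w.subtype)
  rw [LinearMap.range_comp, Submodule.range_subtype, LinearMap.ker_comp, Submodule.ker_mkQ] at h1
  have h2 : finrank F (Submodule.comap w.subtype y) = finrank F y :=
    (Submodule.comapSubtypeEquivOfLe hw).finrank_eq
  rw [h2] at h1
  exact h1

lemma covers_count (y : Submodule F V) :
    Nat.card {w : Submodule F V // y ≤ w ∧ finrank F w = finrank F y + 1}
        * (Fintype.card F - 1) + 1
      = Fintype.card F ^ (finrank F V - finrank F y) := by
  have hquot : finrank F (V ⧸ y) + finrank F y = finrank F V :=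
    Submodule.finrank_quotient_add_finrank y
  have hle : finrank F y ≤ finrank F V := Submodule.finrank_le y
  have e : {ℓ : Submodule F (V ⧸ y) // finrank F ℓ = 1}
      ≃ {w : Submodule F V // y ≤ w ∧ finrank F w = finrank F y + 1} := by
    refine
      { toFun := fun ℓ => ⟨Submodule.comap y.mkQ ℓ.1, ?_, ?_⟩
        invFun := fun w => ⟨Submodule.map y.mkQ w.1, ?_⟩
        left_inv := ?_
        right_inv := ?_ }
    · intro x hx
      simp only [Submodule.mem_comap]
      have : y.mkQ x = 0 := by
        rw [← LinearMap.mem_ker, Submodule.ker_mkQ]; exact hx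
      rw [this]; exact ℓ.1.zero_mem
    · have hle' : y ≤ Submodule.comap y.mkQ ℓ.1 := by
        intro x hx
        simp only [Submodule.mem_comap]
        have : y.mkQ x = 0 := by
          rw [← LinearMap.mem_ker, Submodule.ker_mkQ]; exact hx
        rw [this]; exact ℓ.1.zero_mem
      have h1 := map_mkQ_finrank y (Submodule.comap y.mkQ ℓ.1) hle'
      have h2 : (Submodule.comap y.mkQ ℓ.1).map y.mkQ = ℓ.1 := by
        rw [Submodule.map_comap_eq, Submodule.range_mkQ, top_inf_eq]
      rw [h2, ℓ.2] at h1
      omega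
    · have h1 := map_mkQ_finrank y w.1 w.2.1
      rw [w.2.2] at h1
      omega
    · intro ℓ
      apply Subtype.ext
      simp only
      rw [Submodule.map_comap_eq, Submodule.range_mkQ, top_inf_eq]
    · intro w
      apply Subtype.ext
      simp only
      rw [Submodule.comap_map_eq, Submodule.ker_mkQ, sup_eq_left.mpr w.2.1]
  have := lines_count (F := F) (V ⧸ y)
  rw [Nat.card_congr e] at this
  rw [this]
  congr 1
  omega

lemma hyper_count (y : Submodule F V) :
    Nat.card {w : Submodule F V // w ≤ y ∧ finrank F y = finrank F w + 1}
        * (Fintype.card F - 1) + 1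
      = Fintype.card F ^ finrank F y := by
  have hsum : ∀ w' : Submodule F y, finrank F w' + finrank F w'.dualAnnihilator = finrank F y := by
    intro w'
    have h1 : finrank F (↥y ⧸ w') = finrank F w'.dualAnnihilator :=
      LinearEquiv.finrank_eq (Subspace.quotEquivAnnihilator w')
    have h2 := Submodule.finrank_quotient_add_finrank w'
    omega
  have eA : {w' : Submodule F y // finrank F y = finrank F w' + 1}
      ≃ {w : Submodule F V // w ≤ y ∧ finrank F y = finrank F w + 1} := by
    refine
      { toFun := fun w' => ⟨w'.1.map y.subtype, Submodule.map_subtype_le y w'.1, ?_⟩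
        invFun := fun w => ⟨Submodule.comap y.subtype w.1, ?_⟩
        left_inv := ?_
        right_inv := ?_ }
    · rw [Submodule.finrank_map_subtype_eq]; exact w'.2
    · have h2 : (Submodule.comap y.subtype w.1).map y.subtype = w.1 := by
        rw [Submodule.map_comap_subtype, inf_eq_right.mpr w.2.1]
      have h3 := Submodule.finrank_map_subtype_eq y (Submodule.comap y.subtype w.1)
      rw [h2] at h3
      rw [← h3]; exact w.2.2
    · intro w'
      apply Subtype.ext
      simp only
      rw [Submodule.comap_map_eq, Submodule.ker_subtype, sup_bot_eq]
    · intro w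
      apply Subtype.ext
      simp only
      rw [Submodule.map_comap_subtype, inf_eq_right.mpr w.2.1]
  have eB : {Φ : Submodule F (Module.Dual F y) // finrank F Φ = 1}
      ≃ {w' : Submodule F y // finrank F y = finrank F w' + 1} := by
    refine
      { toFun := fun Φ => ⟨Φ.1.dualCoannihilator, ?_⟩
        invFun := fun w' => ⟨w'.1.dualAnnihilator, ?_⟩
        left_inv := ?_
        right_inv := ?_ }
    · have h1 := Subspace.finrank_add_finrank_dualCoannihilator_eq Φ.1
      rw [Φ.2] at h1
      omega
    · have h1 := hsum w'.1
      have h2 := w'.2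
      omega
    · intro Φ
      exact Subtype.ext (Subspace.dualCoannihilator_dualAnnihilator_eq)
    · intro w'
      exact Subtype.ext (Subspace.dualAnnihilator_dualCoannihilator_eq)
  have := lines_count (F := F) (Module.Dual F y)
  rw [Nat.card_congr (eB.trans eA)] at this
  rw [this, Subspace.dual_finrank_eq]

end Counting

lemma assemble {X : Type*} [Fintype X] [DecidableEq X] (Q : ℝ) (hQ : 1 < Q) (n : ℕ)
    (L R Φ D : Matrix X X ℝ)
    (hDL : D * L = Q⁻¹ • (L * D)) (hDR : D * R = Q • (R * D))
    (hRL : R * L = Q • (L * R) + Φ)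
    (hPL : Φ * L = (Q ^ 2) • (L * Φ) - (Q ^ n * (Q + 1)) • L)
    (hRP : R * Φ = (Q ^ 2) • (Φ * R) - (Q ^ n * (Q + 1)) • R) :
    (L + R) ^ 3 * D - (Q + Q⁻¹ + 1) • ((L + R) ^ 2 * D * (L + R))
      + (Q + Q⁻¹ + 1) • ((L + R) * D * (L + R) ^ 2) - D * (L + R) ^ 3
    = (Q ^ n * (Q + 1) ^ 2 * (Q⁻¹ * Q⁻¹)) • ((L + R) * D - D * (L + R)) := by
  have hQ0 : Q ≠ 0 := by linarith
  set A := L + R with hA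
  set T := Q⁻¹ • L + Q • R with hT
  have h1 : D * A = T * D := by
    rw [hA, hT, mul_add, add_mul, hDL, hDR, smul_mul_assoc, smul_mul_assoc]
  -- straightening lemmas
  have sLRL : L * (R * L) = Q • (L * (L * R)) + L * Φ := by
    rw [hRL, mul_add, mul_smul_comm]
  have sRLL : R * (L * L) = (Q * Q) • (L * (L * R)) + Q • (L * Φ) + Φ * L := by
    calc R * (L * L) = (R * L) * L := by rw [mul_assoc]
    _ = (Q • (L * R) + Φ) * L := by rw [hRL]
    _ = Q • (L * (R * L)) + Φ * L := by rw [add_mul, smul_mul_assoc, mul_assoc]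
    _ = Q • (Q • (L * (L * R)) + L * Φ) + Φ * L := by rw [sLRL]
    _ = (Q * Q) • (L * (L * R)) + Q • (L * Φ) + Φ * L := by
      rw [smul_add, smul_smul]
  have sRLR : R * (L * R) = Q • (L * (R * R)) + Φ * R := by
    calc R * (L * R) = (R * L) * R := by rw [mul_assoc]
    _ = (Q • (L * R) + Φ) * R := by rw [hRL]
    _ = Q • (L * (R * R)) + Φ * R := by rw [add_mul, smul_mul_assoc, mul_assoc]
  have sRRL : R * (R * L) = (Q * Q) • (L * (R * R)) + Q • (Φ * R) + R * Φ := by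
    calc R * (R * L) = R * (Q • (L * R) + Φ) := by rw [hRL]
    _ = Q • (R * (L * R)) + R * Φ := by rw [mul_add, mul_smul_comm]
    _ = Q • (Q • (L * (R * R)) + Φ * R) + R * Φ := by rw [sRLR]
    _ = (Q * Q) • (L * (R * R)) + Q • (Φ * R) + R * Φ := by rw [smul_add, smul_smul]
  -- reduce to key identity
  have key : A * (A * A) - (Q + Q⁻¹ + 1) • (A * (A * T)) + (Q + Q⁻¹ + 1) • (A * (T * T))
      - T * (T * T) = (Q ^ n * (Q + 1) ^ 2 * (Q⁻¹ * Q⁻¹)) • (A - T) := by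
    rw [hA, hT]
    simp only [add_mul, mul_add, smul_mul_assoc, mul_smul_comm, smul_add, smul_smul, smul_sub,
      sub_eq_add_neg, neg_add, ← smul_neg]
    simp only [sLRL, sRLL, sRLR, sRRL, hPL, hRP]
    match_scalars <;> field_simp <;> ring
  have keyD := congrArg (fun M => M * D) key
  simp only [sub_mul, add_mul, smul_mul_assoc, mul_assoc] at keyD
  have d1 : D * A = T * D := h1
  have d2 : D * (A * A) = T * (T * D) := by rw [← mul_assoc, h1, mul_assoc, h1]
  have d3 : D * (A * (A * A)) = T * (T * (T * D)) := by rw [← mul_assoc, h1, mul_assoc, d2]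
  rw [show (A : Matrix X X ℝ) ^ 3 = A * (A * A) by rw [pow_succ', pow_succ', pow_one],
    show (A : Matrix X X ℝ) ^ 2 = A * A from sq A]
  simp only [smul_mul_assoc, mul_assoc]
  simp only [d3, d2, d1]
  exact keyD

section Matrices
variable (F : Type*) [Field F] [Fintype F]
variable (V : Type*) [AddCommGroup V] [Module F V] [FiniteDimensional F V]
variable [Fintype (Submodule F V)]

noncomputable def matL : Matrix (Submodule F V) (Submodule F V) ℝ :=
  fun y z => if z ≤ y ∧ finrank F y = finrank F z + 1 then 1 else 0

noncomputable def matR : Matrix (Submodule F V) (Submodule F V) ℝ :=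
  fun y z => if y ≤ z ∧ finrank F z = finrank F y + 1 then (Fintype.card F : ℝ) ^ finrank F y else 0

noncomputable def matPhi : Matrix (Submodule F V) (Submodule F V) ℝ :=
  Matrix.diagonal (fun y => ((Fintype.card F : ℝ) ^ finrank F V
    - (Fintype.card F : ℝ) ^ (2 * finrank F y)) / ((Fintype.card F : ℝ) - 1))

variable {F V}

lemma hRL : matR F V * matL F V
    = (Fintype.card F : ℝ) • (matL F V * matR F V) + matPhi F V := by
  have hq1 : 1 < Fintype.card F := Fintype.one_lt_card
  have hQ1 : (1:ℝ) < (Fintype.card F : ℝ) := by exact_mod_cast hq1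
  set Q := (Fintype.card F : ℝ) with hQdef
  have hQne : Q - 1 ≠ 0 := by linarith
  ext y z
  rw [Matrix.add_apply, Matrix.smul_apply, Matrix.mul_apply, Matrix.mul_apply, Finset.smul_sum]
  by_cases hdim : finrank F y = finrank F z
  · set d := finrank F y with hd
    -- rewrite LHS sum
    have hLHS : ∑ w, matR F V y w * matL F V w z
        = ∑ w, (if y ≤ w ∧ z ≤ w ∧ finrank F w = d + 1 then Q ^ d else 0) := by
      apply Finset.sum_congr rfl
      intro w _
      unfold matR matL
      by_cases c1 : y ≤ w ∧ finrank F w = finrank F y + 1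
      · by_cases c2 : z ≤ w ∧ finrank F w = finrank F z + 1
        · rw [if_pos c1, if_pos c2, if_pos ⟨c1.1, c2.1, c1.2⟩, mul_one]
        · rw [if_pos c1, if_neg c2, if_neg, mul_zero]
          rintro ⟨-, h2, h3⟩
          exact c2 ⟨h2, by omega⟩
      · rw [if_neg c1, zero_mul, if_neg]
        rintro ⟨h1, -, h3⟩
        exact c1 ⟨h1, h3⟩
    have hRHS : ∑ w, Q • (matL F V y w * matR F V w z)
        = ∑ w, (if w ≤ y ∧ w ≤ z ∧ d = finrank F w + 1 then Q ^ d else 0) := by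
      apply Finset.sum_congr rfl
      intro w _
      unfold matR matL
      by_cases c1 : w ≤ y ∧ finrank F y = finrank F w + 1
      · by_cases c2 : w ≤ z ∧ finrank F z = finrank F w + 1
        · rw [if_pos c1, if_pos c2, if_pos ⟨c1.1, c2.1, c1.2⟩, one_mul, smul_eq_mul,
            ← pow_succ']
          congr 1
          omega
        · rw [if_pos c1, if_neg c2, mul_zero, smul_zero, if_neg]
          rintro ⟨-, h2, h3⟩
          exact c2 ⟨h2, by omega⟩
      · rw [if_neg c1, zero_mul, smul_zero, if_neg]
        rintro ⟨h1, -, h3⟩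
        exact c1 ⟨h1, h3⟩
    rw [hLHS, hRHS, ← Finset.sum_filter, ← Finset.sum_filter, Finset.sum_const,
      Finset.sum_const, nsmul_eq_mul, nsmul_eq_mul]
    by_cases hyz : y = z
    · -- diagonal case
      subst hyz
      have hup : (Finset.univ.filter
            (fun w : Submodule F V => y ≤ w ∧ y ≤ w ∧ finrank F w = d + 1)).card
          = Nat.card {w : Submodule F V // y ≤ w ∧ finrank F w = finrank F y + 1} := by
        rw [Nat.card_eq_fintype_card, Fintype.card_subtype]
        congr 1
        ext w
        simp [← hd, and_assoc]
      have hdn : (Finset.univ.filter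
            (fun w : Submodule F V => w ≤ y ∧ w ≤ y ∧ d = finrank F w + 1)).card
          = Nat.card {w : Submodule F V // w ≤ y ∧ finrank F y = finrank F w + 1} := by
        rw [Nat.card_eq_fintype_card, Fintype.card_subtype]
        congr 1
        ext w
        simp [← hd, and_assoc]
      rw [hup, hdn]
      set a := Nat.card {w : Submodule F V // y ≤ w ∧ finrank F w = finrank F y + 1}
      set b := Nat.card {w : Submodule F V // w ≤ y ∧ finrank F y = finrank F w + 1}
      have ha := covers_count y
      have hb := hyper_count y
      have hdle : finrank F y ≤ finrank F V := Submodule.finrank_le y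
      set n := finrank F V with hn
      have haR : (a:ℝ) * (Q - 1) + 1 = Q ^ (n - d) := by
        have := congrArg (fun m : ℕ => (m:ℝ)) ha
        push_cast [Nat.cast_sub (le_of_lt hq1)] at this
        convert this using 2 <;> push_cast <;> ring
      have hbR : (b:ℝ) * (Q - 1) + 1 = Q ^ d := by
        have := congrArg (fun m : ℕ => (m:ℝ)) hb
        push_cast [Nat.cast_sub (le_of_lt hq1)] at this
        convert this using 2 <;> push_cast <;> ring
      have hc : Q ^ (n - d) * Q ^ d = Q ^ n := by
        rw [← pow_add]; congr 1; omega
      have hc2 : Q ^ d * Q ^ d = Q ^ (2 * d) := by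
        rw [← pow_add]; congr 1; omega
      have key : (a:ℝ) * Q ^ d * (Q - 1) = (b:ℝ) * Q ^ d * (Q - 1) + (Q ^ n - Q ^ (2 * d)) := by
        linear_combination Q ^ d * haR - Q ^ d * hbR + hc - hc2
      have goal' : (a:ℝ) * Q ^ d = (b:ℝ) * Q ^ d + (Q ^ n - Q ^ (2 * d)) / (Q - 1) := by
        field_simp
        linear_combination key
      simpa [matPhi, Matrix.diagonal_apply_eq, ← hQdef, ← hn, ← hd] using goal'
    · -- off diagonal, equal dims
      have hΦ : matPhi F V y z = 0 := Matrix.diagonal_apply_ne _ hyz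
      rw [hΦ, add_zero]
      have hfr : finrank F z = d := hdim.symm
      have hylt : y < y ⊔ z := by
        rcases lt_or_eq_of_le (le_sup_left : y ≤ y ⊔ z) with h | h
        · exact h
        · exfalso
          have hzy : z ≤ y := by rw [h]; exact le_sup_right
          exact hyz (Submodule.eq_of_le_of_finrank_eq hzy (by omega)).symm
      have hsuplt : d < finrank F ↥(y ⊔ z) := Submodule.finrank_lt_finrank_of_lt hylt
      have hsupinf := Submodule.finrank_sup_add_finrank_inf_eq y z
      by_cases hs : finrank F ↥(y ⊔ z) = d + 1
      · have e1 : Finset.univ.filter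
            (fun w : Submodule F V => y ≤ w ∧ z ≤ w ∧ finrank F w = d + 1) = {y ⊔ z} := by
          ext w
          simp only [Finset.mem_filter, Finset.mem_univ, true_and, Finset.mem_singleton]
          constructor
          · rintro ⟨h1, h2, h3⟩
            exact (Submodule.eq_of_le_of_finrank_eq (sup_le h1 h2) (by omega)).symm
          · rintro rfl
            exact ⟨le_sup_left, le_sup_right, hs⟩
        have hinf : finrank F (y ⊓ z : Submodule F V) + 1 = d := by omega
        have e2 : Finset.univ.filter
            (fun w : Submodule F V => w ≤ y ∧ w ≤ z ∧ d = finrank F w + 1) = {y ⊓ z} := by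
          ext w
          simp only [Finset.mem_filter, Finset.mem_univ, true_and, Finset.mem_singleton]
          constructor
          · rintro ⟨h1, h2, h3⟩
            exact Submodule.eq_of_le_of_finrank_eq (le_inf h1 h2) (by omega)
          · rintro rfl
            exact ⟨inf_le_left, inf_le_right, by omega⟩
        rw [e1, e2]
        simp
      · have e1 : Finset.univ.filter
            (fun w : Submodule F V => y ≤ w ∧ z ≤ w ∧ finrank F w = d + 1) = ∅ := by
          ext w
          simp only [Finset.mem_filter, Finset.mem_univ, true_and, Finset.notMem_empty,
            iff_false]
          rintro ⟨h1, h2, h3⟩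
          have := Submodule.finrank_mono (sup_le h1 h2)
          omega
        have e2 : Finset.univ.filter
            (fun w : Submodule F V => w ≤ y ∧ w ≤ z ∧ d = finrank F w + 1) = ∅ := by
          ext w
          simp only [Finset.mem_filter, Finset.mem_univ, true_and, Finset.notMem_empty,
            iff_false]
          rintro ⟨h1, h2, h3⟩
          have := Submodule.finrank_mono (le_inf h1 h2)
          omega
        rw [e1, e2]
  · -- different dimensions
    have hyz : y ≠ z := fun h => hdim (by rw [h])
    have hΦ : matPhi F V y z = 0 := Matrix.diagonal_apply_ne _ hyz
    rw [hΦ, add_zero]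
    have h1 : ∑ w, matR F V y w * matL F V w z = 0 := by
      apply Finset.sum_eq_zero
      intro w _
      unfold matR matL
      by_cases c1 : y ≤ w ∧ finrank F w = finrank F y + 1
      · rw [if_pos c1, if_neg, mul_zero]
        rintro ⟨-, h3⟩
        omega
      · rw [if_neg c1, zero_mul]
    have h2 : ∑ w, Q • (matL F V y w * matR F V w z) = 0 := by
      apply Finset.sum_eq_zero
      intro w _
      unfold matR matL
      by_cases c1 : w ≤ y ∧ finrank F y = finrank F w + 1
      · rw [if_pos c1, if_neg, mul_zero, smul_zero]
        rintro ⟨-, h3⟩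
        omega
      · rw [if_neg c1, zero_mul, smul_zero]
    rw [h1, h2]


variable (F V) in
noncomputable def matD : Matrix (Submodule F V) (Submodule F V) ℝ :=
  Matrix.diagonal (fun y : Submodule F V => (Fintype.card F : ℝ) ^ (-(finrank F y : ℤ)))

lemma hDL : matD F V * matL F V = (Fintype.card F : ℝ)⁻¹ • (matL F V * matD F V) := by
  have hQ : (Fintype.card F : ℝ) ≠ 0 := by
    have : 0 < Fintype.card F := Fintype.card_pos
    positivity
  ext y z
  simp only [matD, matL, Matrix.diagonal_mul, Matrix.mul_diagonal, Matrix.smul_apply,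
    smul_eq_mul]
  by_cases h : z ≤ y ∧ finrank F y = finrank F z + 1
  · simp only [if_pos h]
    rw [h.2]
    push_cast
    rw [neg_add, zpow_add₀ hQ]
    simp only [zpow_neg, zpow_one, zpow_natCast]
    ring
  · simp [if_neg h]

lemma hDR : matD F V * matR F V = (Fintype.card F : ℝ) • (matR F V * matD F V) := by
  have hQ : (Fintype.card F : ℝ) ≠ 0 := by
    have : 0 < Fintype.card F := Fintype.card_pos
    positivity
  ext y z
  simp only [matD, matR, Matrix.diagonal_mul, Matrix.mul_diagonal, Matrix.smul_apply,
    smul_eq_mul]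
  by_cases h : y ≤ z ∧ finrank F z = finrank F y + 1
  · simp only [if_pos h]
    rw [h.2]
    push_cast
    rw [neg_add, zpow_add₀ hQ]
    simp only [zpow_neg, zpow_one, zpow_natCast]
    field_simp
  · simp [if_neg h]

lemma hPL : matPhi F V * matL F V
    = ((Fintype.card F : ℝ) ^ 2) • (matL F V * matPhi F V)
      - ((Fintype.card F : ℝ) ^ finrank F V * ((Fintype.card F : ℝ) + 1)) • matL F V := by
  have hQ1 : (1:ℝ) < (Fintype.card F : ℝ) := by
    have : 1 < Fintype.card F := Fintype.one_lt_card
    exact_mod_cast this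
  set Q := (Fintype.card F : ℝ) with hQdef
  have hQne : Q - 1 ≠ 0 := by linarith
  ext y z
  simp only [matPhi, matL, Matrix.diagonal_mul, Matrix.mul_diagonal, Matrix.smul_apply,
    Matrix.sub_apply, smul_eq_mul]
  by_cases h : z ≤ y ∧ finrank F y = finrank F z + 1
  · simp only [if_pos h]
    rw [h.2]
    have hpow : Q ^ (2 * (finrank F z + 1)) = Q ^ (2 * finrank F z) * Q ^ 2 := by ring
    have hQne' : (Fintype.card F : ℝ) - 1 ≠ 0 := hQne
    field_simp
    linear_combination hpow
  · simp [if_neg h]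

lemma hRP : matR F V * matPhi F V
    = ((Fintype.card F : ℝ) ^ 2) • (matPhi F V * matR F V)
      - ((Fintype.card F : ℝ) ^ finrank F V * ((Fintype.card F : ℝ) + 1)) • matR F V := by
  have hQ1 : (1:ℝ) < (Fintype.card F : ℝ) := by
    have : 1 < Fintype.card F := Fintype.one_lt_card
    exact_mod_cast this
  set Q := (Fintype.card F : ℝ) with hQdef
  have hQne : Q - 1 ≠ 0 := by linarith
  ext y z
  simp only [matPhi, matR, Matrix.diagonal_mul, Matrix.mul_diagonal, Matrix.smul_apply,
    Matrix.sub_apply, smul_eq_mul]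
  by_cases h : y ≤ z ∧ finrank F z = finrank F y + 1
  · simp only [if_pos h]
    rw [h.2]
    have hpow : Q ^ (2 * (finrank F y + 1)) = Q ^ (2 * finrank F y) * Q ^ 2 := by ring
    have hQne' : (Fintype.card F : ℝ) - 1 ≠ 0 := hQne
    field_simp
    linear_combination Q ^ finrank F y * hpow
  · simp [if_neg h]

end Matrices

theorem stmt_16 (q N : ℕ) (F : Type*) [Field F] [Fintype F] (hF : Fintype.card F = q)
    (V : Type*) [AddCommGroup V] [Module F V] [FiniteDimensional F V]
    (hV : finrank F V = N) [Fintype (Submodule F V)]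
    (A : Matrix (Submodule F V) (Submodule F V) ℝ)
    (hA : ∀ y z : Submodule F V, A y z =
      if z ≤ y ∧ finrank F y = finrank F z + 1 then 1
      else if y ≤ z ∧ finrank F z = finrank F y + 1 then (q : ℝ) ^ finrank F y
      else 0)
    (Astar : Matrix (Submodule F V) (Submodule F V) ℝ)
    (hAstar : ∀ y z : Submodule F V, Astar y z =
      if y = z then (q : ℝ) ^ (-(finrank F y : ℤ)) else 0) :
    A ^ 3 * Astar - ((q : ℝ) + (q : ℝ)⁻¹ + 1) • (A ^ 2 * Astar * A)
      + ((q : ℝ) + (q : ℝ)⁻¹ + 1) • (A * Astar * A ^ 2) - Astar * A ^ 3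
    = ((q : ℝ) ^ ((N : ℤ) - 2) * ((q : ℝ) + 1) ^ 2) • (A * Astar - Astar * A) := by
  subst hF
  subst hV
  have hq1 : 1 < Fintype.card F := Fintype.one_lt_card
  have hQ1 : (1:ℝ) < (Fintype.card F : ℝ) := by exact_mod_cast hq1
  have hQ0 : (Fintype.card F : ℝ) ≠ 0 := by linarith
  have hAeq : A = matL F V + matR F V := by
    ext y z
    rw [hA]
    simp only [Matrix.add_apply]
    unfold matL matR
    by_cases c1 : z ≤ y ∧ finrank F y = finrank F z + 1
    · have c2 : ¬(y ≤ z ∧ finrank F z = finrank F y + 1) := by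
        rintro ⟨-, h2⟩
        rcases c1 with ⟨-, h1⟩
        omega
      rw [if_pos c1, if_pos c1, if_neg c2, add_zero]
    · rw [if_neg c1, if_neg c1, zero_add]
  have hAstareq : Astar = matD F V := by
    ext y z
    rw [hAstar]
    simp [matD, Matrix.diagonal_apply]
  rw [hAeq, hAstareq]
  have main := assemble (Fintype.card F : ℝ) hQ1 (finrank F V)
    (matL F V) (matR F V) (matPhi F V) (matD F V) hDL hDR hRL hPL hRP
  rw [main]
  congr 1
  rw [zpow_sub₀ hQ0, zpow_natCast]
  rw [show ((2:ℤ)) = ((2:ℕ):ℤ) by norm_num, zpow_natCast]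
  field_simp
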